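/- On ℝ³ with coordinates (x, y, z), let g be the Riemannian metric g = dx² + dy² + (dz − x dy)²; explicitly, g at the point with x-coordinate x sends vectors a, b ∈ ℝ³ to a_x b_x + a_y b_y + (a_z − x a_y)(b_z − x b_y). Then the real vector space of smooth conformal Killing fields of g on ℝ³ is finite-dimensional of dimension exactly 4; it is spanned by the Killing fields ∂_y, ∂_z, ∂_x + y ∂_z, and y ∂_x − x ∂_y + ½(y² − x²) ∂_z. -/

import Mathlib

open scoped BigOperators

noncomputable section

/-- Points/vectors of `ℝⁿ`. -/
abbrev Vec (n : ℕ) := Fin n → ℝ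

/-- Evaluation of a metric (given by its component functions `g p i j`) as a
bilinear form at `p`. -/
def metricEval {n : ℕ} (g : Vec n → Fin n → Fin n → ℝ) (p : Vec n) (u v : Vec n) : ℝ :=
  ∑ i, ∑ j, u i * g p i j * v j

/-- The Lie derivative equation `L_X g = f · g` holds at every point of `U`:
`(D_p g)(X(p))(u,v) + g(p)(D_p X(u), v) + g(p)(u, D_p X(v)) = f(p) · g(p)(u,v)`. -/
def LieDerivEq {n : ℕ} (U : Set (Vec n)) (g : Vec n → Fin n → Fin n → ℝ)
    (X : Vec n → Vec n) (f : Vec n → ℝ) : Prop :=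
  ∀ p ∈ U, ∀ u v : Vec n,
    (∑ i, ∑ j, u i * fderiv ℝ (fun q => g q i j) p (X p) * v j)
      + metricEval g p (fderiv ℝ X p u) v + metricEval g p u (fderiv ℝ X p v)
      = f p * metricEval g p u v

/-- A smooth conformal Killing field of `g` on `U`. -/
def IsConformalKillingOn {n : ℕ} (U : Set (Vec n)) (g : Vec n → Fin n → Fin n → ℝ)
    (X : Vec n → Vec n) : Prop :=
  ContDiffOn ℝ (⊤ : ℕ∞) X U ∧ ∃ f : Vec n → ℝ, LieDerivEq U g X f

/-- A smooth Killing field of `g` on `U` (`L_X g = 0`). -/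
def IsKillingOn {n : ℕ} (U : Set (Vec n)) (g : Vec n → Fin n → Fin n → ℝ)
    (X : Vec n → Vec n) : Prop :=
  ContDiffOn ℝ (⊤ : ℕ∞) X U ∧ LieDerivEq U g X fun _ => 0

/-- A smooth homothety of `g` on `U` (`L_X g = c · g` with `c` a nonzero constant). -/
def IsHomothetyOn {n : ℕ} (U : Set (Vec n)) (g : Vec n → Fin n → Fin n → ℝ)
    (X : Vec n → Vec n) : Prop :=
  ContDiffOn ℝ (⊤ : ℕ∞) X U ∧ ∃ c : ℝ, c ≠ 0 ∧ LieDerivEq U g X fun _ => c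

/-- The bilinear form of the Riemannian metric `dx² + dy² + (dz − x dy)²`
on `ℝ³` with coordinates `(x, y, z)` (indices `0,1,2`). -/
def rie3Form (x a b : Vec 3) : ℝ :=
  a 0 * b 0 + a 1 * b 1 + (a 2 - x 0 * a 1) * (b 2 - x 0 * b 1)

/-- Components of the metric `dx² + dy² + (dz − x dy)²`. -/
def rie3Metric (x : Vec 3) (i j : Fin 3) : ℝ := rie3Form x (Pi.single i 1) (Pi.single j 1)

/-- `∂_y`. -/
def rie3X1 : Vec 3 → Vec 3 := fun _ => ![0, 1, 0]
/-- `∂_z`. -/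
def rie3X2 : Vec 3 → Vec 3 := fun _ => ![0, 0, 1]
/-- `∂_x + y ∂_z`. -/
def rie3X3 : Vec 3 → Vec 3 := fun x => ![1, 0, x 1]
/-- `y ∂_x − x ∂_y + ½(y² − x²) ∂_z`. -/
def rie3X4 : Vec 3 → Vec 3 := fun x => ![x 1, -x 0, (1 / 2) * ((x 1) ^ 2 - (x 0) ^ 2)]

/-- The four fields. -/
def rie3Basis : Fin 4 → (Vec 3 → Vec 3) := ![rie3X1, rie3X2, rie3X3, rie3X4]

/-! ### Infrastructure: directional derivatives -/

def e3 (i : Fin 3) : Vec 3 := Pi.single i 1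

/-- Directional derivative along the `i`-th coordinate direction. -/
def pd (i : Fin 3) (F : Vec 3 → ℝ) : Vec 3 → ℝ := fun p => fderiv ℝ F p (e3 i)

def proj3 (i : Fin 3) : Vec 3 →L[ℝ] ℝ := ContinuousLinearMap.proj i

abbrev Sm (F : Vec 3 → ℝ) : Prop := ContDiff ℝ (⊤:ℕ∞) F

lemma Sm.diffAt {F : Vec 3 → ℝ} (hF : Sm F) {p : Vec 3} : DifferentiableAt ℝ F p :=
  (hF.differentiable (by simp)).differentiableAt

lemma ContDiff.pd' {F : Vec 3 → ℝ} (hF : Sm F) (i : Fin 3) : Sm (pd i F) := by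
  have h1 : ContDiff ℝ (⊤:ℕ∞) (fderiv ℝ F) := hF.fderiv_right (by simp)
  exact (ContinuousLinearMap.apply ℝ ℝ (e3 i)).contDiff.comp h1

lemma pd_comm {F : Vec 3 → ℝ} (hF : Sm F) (i j : Fin 3) (p : Vec 3) :
    pd i (pd j F) p = pd j (pd i F) p := by
  have hdF : Differentiable ℝ F := hF.differentiable (by simp)
  have h1 : ContDiff ℝ (⊤:ℕ∞) (fderiv ℝ F) := hF.fderiv_right (by simp)
  have hx : HasFDerivAt (fderiv ℝ F) (fderiv ℝ (fderiv ℝ F) p) p :=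
    (h1.differentiable (by simp)).differentiableAt.hasFDerivAt
  have hsym := second_derivative_symmetric (fun y => (hdF y).hasFDerivAt) hx (e3 i) (e3 j)
  have key : ∀ k l : Fin 3, pd k (pd l F) p = (fderiv ℝ (fderiv ℝ F) p) (e3 k) (e3 l) := by
    intro k l
    unfold pd
    rw [fderiv_clm_apply (h1.differentiable (by simp)).differentiableAt
      (differentiableAt_const _)]
    simp
  rw [key i j, key j i, hsym]

lemma pd_congr' {F G : Vec 3 → ℝ} (h : ∀ p, F p = G p) (i : Fin 3) (p : Vec 3) :
    pd i F p = pd i G p := by rw [funext h]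

lemma pd_add {F G : Vec 3 → ℝ} (hF : Sm F) (hG : Sm G) (i : Fin 3) (p : Vec 3) :
    pd i (fun q => F q + G q) p = pd i F p + pd i G p := by
  unfold pd; rw [fderiv_fun_add hF.diffAt hG.diffAt]; rfl

lemma pd_sub {F G : Vec 3 → ℝ} (hF : Sm F) (hG : Sm G) (i : Fin 3) (p : Vec 3) :
    pd i (fun q => F q - G q) p = pd i F p - pd i G p := by
  unfold pd; rw [fderiv_fun_sub hF.diffAt hG.diffAt]; rfl

lemma pd_neg {F : Vec 3 → ℝ} (i : Fin 3) (p : Vec 3) :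
    pd i (fun q => -(F q)) p = -(pd i F p) := by
  unfold pd; rw [fderiv_fun_neg]; rfl

lemma pd_const (c : ℝ) (i : Fin 3) (p : Vec 3) : pd i (fun _ => c) p = 0 := by
  unfold pd; simp

lemma pd_cmul {F : Vec 3 → ℝ} (hF : Sm F) (c : ℝ) (i : Fin 3) (p : Vec 3) :
    pd i (fun q => c * F q) p = c * pd i F p := by
  unfold pd; rw [fderiv_const_mul hF.diffAt]; rfl

lemma pd_mul {F G : Vec 3 → ℝ} (hF : Sm F) (hG : Sm G) (i : Fin 3) (p : Vec 3) :
    pd i (fun q => F q * G q) p = pd i F p * G p + F p * pd i G p := by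
  unfold pd; rw [fderiv_fun_mul hF.diffAt hG.diffAt]; simp; ring

lemma pd_coord (i j : Fin 3) (p : Vec 3) :
    pd i (fun q : Vec 3 => q j) p = if i = j then 1 else 0 := by
  unfold pd
  have h : HasFDerivAt (fun q : Vec 3 => q j) (proj3 j) p :=
    (proj3 j : Vec 3 →L[ℝ] ℝ).hasFDerivAt
  rw [h.fderiv]
  simp [proj3, e3, Pi.single_apply]
  rcases eq_or_ne i j with h2 | h2
  · simp [h2]
  · simp [h2, h2.symm]

lemma sm_coord (j : Fin 3) : Sm (fun q : Vec 3 => q j) :=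
  (ContinuousLinearMap.proj j : Vec 3 →L[ℝ] ℝ).contDiff

lemma fderiv_comp_proj {Y : Vec 3 → Vec 3} (hY : Differentiable ℝ Y) (p w : Vec 3) (k : Fin 3) :
    fderiv ℝ Y p w k = fderiv ℝ (fun q => Y q k) p w := by
  have h : HasFDerivAt (fun q => Y q k) ((proj3 k).comp (fderiv ℝ Y p)) p :=
    ((proj3 k).hasFDerivAt).comp p (hY p).hasFDerivAt
  rw [h.fderiv]; rfl

lemma eq_const_of_pd_zero {F : Vec 3 → ℝ} (hF : Sm F) (h0 : ∀ i p, pd i F p = 0) :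
    ∀ p : Vec 3, F p = F 0 := by
  intro p
  apply is_const_of_fderiv_eq_zero (𝕜 := ℝ) (hF.differentiable (by simp))
  intro x
  ext w
  have hw : (w : Vec 3) = ∑ j, w j • e3 j := by
    funext k
    simp [e3, Pi.single_apply, Finset.sum_apply]
  rw [ContinuousLinearMap.zero_apply]
  calc fderiv ℝ F x w = fderiv ℝ F x (∑ j, w j • e3 j) := by rw [← hw]
    _ = ∑ j, w j • fderiv ℝ F x (e3 j) := by rw [map_sum]; simp
    _ = 0 := by
        apply Finset.sum_eq_zero; intro j _
        have := h0 j x; unfold pd at this; rw [this]; simp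

/-! ### The metric -/

lemma metricEval_rie3 (p u v : Vec 3) :
    metricEval rie3Metric p u v =
      u 0 * v 0 + (1 + p 0 * p 0) * (u 1 * v 1) - p 0 * (u 1 * v 2) - p 0 * (u 2 * v 1)
        + u 2 * v 2 := by
  simp [metricEval, Fin.sum_univ_three, rie3Metric, rie3Form, Pi.single_apply]
  ring

lemma hg00 : (fun q : Vec 3 => rie3Metric q 0 0) = fun _ => (1:ℝ) := by
  funext q; simp [rie3Metric, rie3Form, Pi.single_apply]
lemma hg01 : (fun q : Vec 3 => rie3Metric q 0 1) = fun _ => (0:ℝ) := by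
  funext q; simp [rie3Metric, rie3Form, Pi.single_apply]
lemma hg02 : (fun q : Vec 3 => rie3Metric q 0 2) = fun _ => (0:ℝ) := by
  funext q; simp [rie3Metric, rie3Form, Pi.single_apply]
lemma hg10 : (fun q : Vec 3 => rie3Metric q 1 0) = fun _ => (0:ℝ) := by
  funext q; simp [rie3Metric, rie3Form, Pi.single_apply]
lemma hg20 : (fun q : Vec 3 => rie3Metric q 2 0) = fun _ => (0:ℝ) := by
  funext q; simp [rie3Metric, rie3Form, Pi.single_apply]
lemma hg11 : (fun q : Vec 3 => rie3Metric q 1 1) = fun q => 1 + q 0 * q 0 := by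
  funext q; simp [rie3Metric, rie3Form, Pi.single_apply]
lemma hg12 : (fun q : Vec 3 => rie3Metric q 1 2) = fun q => -(q 0) := by
  funext q; simp [rie3Metric, rie3Form, Pi.single_apply]
lemma hg21 : (fun q : Vec 3 => rie3Metric q 2 1) = fun q => -(q 0) := by
  funext q; simp [rie3Metric, rie3Form, Pi.single_apply]
lemma hg22 : (fun q : Vec 3 => rie3Metric q 2 2) = fun _ => (1:ℝ) := by
  funext q; simp [rie3Metric, rie3Form, Pi.single_apply]

lemma hasF_coord (i : Fin 3) (p : Vec 3) : HasFDerivAt (fun q : Vec 3 => q i) (proj3 i) p :=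
  (proj3 i).hasFDerivAt

lemma fderiv_sq0 (p : Vec 3) (w : Vec 3) :
    fderiv ℝ (fun q : Vec 3 => 1 + q 0 * q 0) p w = 2 * p 0 * w 0 := by
  have h : HasFDerivAt (fun q : Vec 3 => 1 + q 0 * q 0)
      (p 0 • proj3 0 + p 0 • proj3 0) p := (((hasF_coord 0 p).mul (hasF_coord 0 p))).const_add 1
  rw [h.fderiv]
  simp [proj3]
  ring

lemma fderiv_neg0 (p : Vec 3) (w : Vec 3) :
    fderiv ℝ (fun q : Vec 3 => -(q 0)) p w = -(w 0) := by
  have h : HasFDerivAt (fun q : Vec 3 => -(q 0)) (-(proj3 0)) p := (hasF_coord 0 p).neg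
  rw [h.fderiv]; simp [proj3]

lemma lie_first (p w u v : Vec 3) :
    (∑ i, ∑ j, u i * fderiv ℝ (fun q => rie3Metric q i j) p w * v j)
      = 2 * p 0 * w 0 * (u 1 * v 1) - w 0 * (u 1 * v 2) - w 0 * (u 2 * v 1) := by
  rw [Fin.sum_univ_three]
  conv_lhs => rw [Fin.sum_univ_three, Fin.sum_univ_three, Fin.sum_univ_three]
  rw [hg00, hg01, hg02, hg10, hg11, hg12, hg20, hg21, hg22]
  rw [fderiv_sq0, fderiv_neg0]
  simp only [fderiv_fun_const, Pi.zero_apply, ContinuousLinearMap.zero_apply]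
  ring

/-! ### The key PDE lemma -/

lemma key (A B C : Vec 3 → ℝ) (hA : Sm A) (hB : Sm B) (hC : Sm C)
    (e1 : ∀ p, pd 1 A p + (1 + p 0 * p 0) * pd 0 B p - p 0 * pd 0 C p = 0)
    (e2 : ∀ p, pd 2 A p - p 0 * pd 0 B p + pd 0 C p = 0)
    (e3 : ∀ p, 2 * p 0 * A p + 2 * ((1 + p 0 * p 0) * pd 1 B p - p 0 * pd 1 C p)
        = 2 * pd 0 A p * (1 + p 0 * p 0))
    (e4 : ∀ p, -(A p) + (-(p 0) * pd 1 B p + pd 1 C p)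
        + ((1 + p 0 * p 0) * pd 2 B p - p 0 * pd 2 C p) = -(2 * pd 0 A p) * p 0)
    (e5 : ∀ p, 2 * (-(p 0) * pd 2 B p + pd 2 C p) = 2 * pd 0 A p) :
    (∀ p, A p = A 0 + pd 1 A 0 * p 1) ∧
    (∀ p, B p = B 0 - pd 1 A 0 * p 0) ∧
    (∀ p, C p = C 0 + A 0 * p 1 + pd 1 A 0 / 2 * (p 1 * p 1 - p 0 * p 0)) := by
  -- the auxiliary field P = C - x B
  set P : Vec 3 → ℝ := fun q => C q - q 0 * B q with hPdef
  have hP : Sm P := hC.sub ((sm_coord 0).mul hB)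
  -- smoothness of iterated derivatives of A
  have sa0 : Sm (pd 0 A) := hA.pd' 0
  have sa1 : Sm (pd 1 A) := hA.pd' 1
  have sa2 : Sm (pd 2 A) := hA.pd' 2
  have sa00 : Sm (pd 0 (pd 0 A)) := sa0.pd' 0
  have sa02 : Sm (pd 0 (pd 2 A)) := sa2.pd' 0
  have sa22 : Sm (pd 2 (pd 2 A)) := sa2.pd' 2
  have sa000 : Sm (pd 0 (pd 0 (pd 0 A))) := sa00.pd' 0
  have sa002 : Sm (pd 0 (pd 0 (pd 2 A))) := sa02.pd' 0
  have sa022 : Sm (pd 0 (pd 2 (pd 2 A))) := sa22.pd' 0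
  have sa222 : Sm (pd 2 (pd 2 (pd 2 A))) := sa22.pd' 2
  -- first derivatives of P
  have hP0 : ∀ p, pd 0 P p = pd 0 C p - (B p + p 0 * pd 0 B p) := by
    intro p
    rw [hPdef, pd_sub hC ((sm_coord 0).mul hB), pd_mul (sm_coord 0) hB, pd_coord]
    simp
  have hP1 : ∀ p, pd 1 P p = pd 1 C p - p 0 * pd 1 B p := by
    intro p
    rw [hPdef, pd_sub hC ((sm_coord 0).mul hB), pd_mul (sm_coord 0) hB, pd_coord]
    simp
  have hP2 : ∀ p, pd 2 P p = pd 2 C p - p 0 * pd 2 B p := by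
    intro p
    rw [hPdef, pd_sub hC ((sm_coord 0).mul hB), pd_mul (sm_coord 0) hB, pd_coord]
    simp
  -- the five first-order equations
  have hD1 : ∀ p, pd 0 P p = -(pd 2 A p) - B p := by
    intro p; linear_combination hP0 p + e2 p
  have hD3 : ∀ p, pd 2 P p = pd 0 A p := by
    intro p; linear_combination hP2 p + (1/2) * e5 p
  have hD2 : ∀ p, pd 1 P p = A p - pd 2 B p - p 0 * pd 0 A p := by
    intro p; linear_combination hP1 p + e4 p + (p 0 / 2) * e5 p
  have hD4 : ∀ p, pd 0 B p = -(pd 1 A p) - p 0 * pd 2 A p := by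
    intro p; linear_combination e1 p + p 0 * e2 p
  have hD5 : ∀ p, pd 1 B p = pd 0 A p - p 0 * pd 2 B p := by
    intro p; linear_combination (1/2) * e3 p + p 0 * hD2 p - p 0 * hP1 p
  -- I2 : B_z = -(A_zz + A_xx)
  have hBz : ∀ p, pd 2 B p = -(pd 2 (pd 2 A) p) - pd 0 (pd 0 A) p := by
    have e : pd 0 P = fun q => -(pd 2 A q) - B q := funext hD1
    have e' : pd 2 P = fun q => pd 0 A q := funext hD3
    intro p
    have d1 : pd 2 (pd 0 P) p = -(pd 2 (pd 2 A) p) - pd 2 B p := by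
      rw [e, pd_sub sa2.neg hB, pd_neg]
    have d2 : pd 0 (pd 2 P) p = pd 0 (pd 0 A) p := by rw [e']
    have hc := pd_comm hP 2 0 p
    linear_combination d1 - d2 - hc
  -- refined forms of P_y and B_y
  have hP1' : ∀ p, pd 1 P p = A p + pd 2 (pd 2 A) p + pd 0 (pd 0 A) p - p 0 * pd 0 A p := by
    intro p; linear_combination hD2 p - hBz p
  have hB1' : ∀ p, pd 1 B p = pd 0 A p + p 0 * (pd 2 (pd 2 A) p + pd 0 (pd 0 A) p) := by
    intro p; linear_combination hD5 p - p 0 * hBz p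
  -- R1
  have hR1 : ∀ p, pd 1 (pd 2 A) p
      = -(pd 0 A p) - p 0 * pd 2 (pd 2 A) p - pd 0 (pd 2 (pd 2 A)) p
        - pd 0 (pd 0 (pd 0 A)) p := by
    have e : pd 0 P = fun q => -(pd 2 A q) - B q := funext hD1
    have e' : pd 1 P = fun q => A q + pd 2 (pd 2 A) q + pd 0 (pd 0 A) q - q 0 * pd 0 A q :=
      funext hP1'
    intro p
    have d1 : pd 1 (pd 0 P) p = -(pd 1 (pd 2 A) p) - pd 1 B p := by
      rw [e, pd_sub sa2.neg hB, pd_neg]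
    have d2 : pd 0 (pd 1 P) p
        = pd 0 A p + pd 0 (pd 2 (pd 2 A)) p + pd 0 (pd 0 (pd 0 A)) p
          - (pd 0 A p + p 0 * pd 0 (pd 0 A) p) := by
      rw [e', pd_sub ((hA.add sa22).add sa00) ((sm_coord 0).mul sa0),
        pd_add (hA.add sa22) sa00, pd_add hA sa22, pd_mul (sm_coord 0) sa0, pd_coord]
      simp
    have hc := pd_comm hP 1 0 p
    have hb := hB1' p
    linear_combination d1 - d2 - hc - hb
  -- R2
  have hR2 : ∀ p, pd 1 (pd 2 A) p
      = -(p 0) * pd 2 (pd 2 A) p + pd 0 (pd 2 (pd 2 A)) p + pd 0 (pd 0 (pd 0 A)) p := by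
    have e : pd 0 B = fun q => -(pd 1 A q) - q 0 * pd 2 A q := funext hD4
    have e' : pd 2 B = fun q => -(pd 2 (pd 2 A) q) - pd 0 (pd 0 A) q := funext hBz
    intro p
    have d1 : pd 2 (pd 0 B) p = -(pd 2 (pd 1 A) p) - (p 0 * pd 2 (pd 2 A) p) := by
      rw [e, pd_sub sa1.neg ((sm_coord 0).mul sa2), pd_neg, pd_mul (sm_coord 0) sa2, pd_coord]
      simp
    have d2 : pd 0 (pd 2 B) p = -(pd 0 (pd 2 (pd 2 A)) p) - pd 0 (pd 0 (pd 0 A)) p := by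
      rw [e', pd_sub sa22.neg sa00, pd_neg]
    have hc := pd_comm hB 2 0 p
    have hc2 := pd_comm hA 2 1 p
    linear_combination d1 - d2 - hc - hc2
  -- normalization lemmas (commuting mixed partials into canonical order)
  have n02 : ∀ p, pd 2 (pd 0 A) p = pd 0 (pd 2 A) p := pd_comm hA 2 0
  have n10 : ∀ p, pd 1 (pd 0 A) p = pd 0 (pd 1 A) p := pd_comm hA 1 0
  have n002 : ∀ p, pd 2 (pd 0 (pd 0 A)) p = pd 0 (pd 0 (pd 2 A)) p := by
    intro p
    calc pd 2 (pd 0 (pd 0 A)) p = pd 0 (pd 2 (pd 0 A)) p := pd_comm sa0 2 0 p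
      _ = pd 0 (pd 0 (pd 2 A)) p := pd_congr' n02 0 p
  have n022 : ∀ p, pd 2 (pd 0 (pd 2 A)) p = pd 0 (pd 2 (pd 2 A)) p := pd_comm sa2 2 0
  have n012 : ∀ p, pd 2 (pd 0 (pd 1 A)) p = pd 0 (pd 1 (pd 2 A)) p := by
    intro p
    calc pd 2 (pd 0 (pd 1 A)) p = pd 0 (pd 2 (pd 1 A)) p := pd_comm sa1 2 0 p
      _ = pd 0 (pd 1 (pd 2 A)) p := pd_congr' (pd_comm hA 2 1) 0 p
  have n112 : ∀ p, pd 2 (pd 1 (pd 1 A)) p = pd 1 (pd 1 (pd 2 A)) p := by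
    intro p
    calc pd 2 (pd 1 (pd 1 A)) p = pd 1 (pd 2 (pd 1 A)) p := pd_comm sa1 2 1 p
      _ = pd 1 (pd 1 (pd 2 A)) p := pd_congr' (pd_comm hA 2 1) 1 p
  have n122 : ∀ p, pd 2 (pd 1 (pd 2 A)) p = pd 1 (pd 2 (pd 2 A)) p := pd_comm sa2 2 1
  have n1222 : ∀ p, pd 2 (pd 1 (pd 2 (pd 2 A))) p = pd 1 (pd 2 (pd 2 (pd 2 A))) p :=
    pd_comm sa22 2 1
  have n0022 : ∀ p, pd 2 (pd 0 (pd 0 (pd 2 A))) p = pd 0 (pd 0 (pd 2 (pd 2 A))) p := by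
    intro p
    calc pd 2 (pd 0 (pd 0 (pd 2 A))) p = pd 0 (pd 2 (pd 0 (pd 2 A))) p := pd_comm sa02 2 0 p
      _ = pd 0 (pd 0 (pd 2 (pd 2 A))) p := pd_congr' n022 0 p
  have n0002 : ∀ p, pd 2 (pd 0 (pd 0 (pd 0 A))) p = pd 0 (pd 0 (pd 0 (pd 2 A))) p := by
    intro p
    calc pd 2 (pd 0 (pd 0 (pd 0 A))) p = pd 0 (pd 2 (pd 0 (pd 0 A))) p := pd_comm sa00 2 0 p
      _ = pd 0 (pd 0 (pd 0 (pd 2 A))) p := pd_congr' n002 0 p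
  have n0222 : ∀ p, pd 2 (pd 0 (pd 2 (pd 2 A))) p = pd 0 (pd 2 (pd 2 (pd 2 A))) p :=
    pd_comm sa22 2 0
  have n0012 : ∀ p, pd 1 (pd 0 (pd 0 (pd 2 A))) p = pd 0 (pd 0 (pd 1 (pd 2 A))) p := by
    intro p
    calc pd 1 (pd 0 (pd 0 (pd 2 A))) p = pd 0 (pd 1 (pd 0 (pd 2 A))) p := pd_comm sa02 1 0 p
      _ = pd 0 (pd 0 (pd 1 (pd 2 A))) p := pd_congr' (pd_comm sa2 1 0) 0 p
  have n012b : ∀ p, pd 1 (pd 0 (pd 2 A)) p = pd 0 (pd 1 (pd 2 A)) p := pd_comm sa2 1 0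
  have n011 : ∀ p, pd 1 (pd 0 (pd 1 A)) p = pd 0 (pd 1 (pd 1 A)) p := pd_comm sa1 1 0
  -- K4 and K2
  have hK4 : ∀ p, pd 0 (pd 0 (pd 0 A)) p = -(1/2) * pd 0 A p - pd 0 (pd 2 (pd 2 A)) p := by
    intro p; linear_combination (1/2) * hR1 p - (1/2) * hR2 p
  have hK2 : ∀ p, pd 1 (pd 2 A) p = -(1/2) * pd 0 A p - p 0 * pd 2 (pd 2 A) p := by
    intro p; linear_combination (1/2) * hR1 p + (1/2) * hR2 p
  -- K1
  have hK1 : ∀ p, pd 0 (pd 1 A) p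
      = pd 2 A p + pd 2 (pd 2 (pd 2 A)) p + pd 0 (pd 0 (pd 2 A)) p - p 0 * pd 0 (pd 2 A) p := by
    have e : pd 1 P = fun q => A q + pd 2 (pd 2 A) q + pd 0 (pd 0 A) q - q 0 * pd 0 A q :=
      funext hP1'
    have e' : pd 2 P = fun q => pd 0 A q := funext hD3
    intro p
    have d1 : pd 2 (pd 1 P) p
        = pd 2 A p + pd 2 (pd 2 (pd 2 A)) p + pd 2 (pd 0 (pd 0 A)) p
          - (p 0 * pd 2 (pd 0 A) p) := by
      rw [e, pd_sub ((hA.add sa22).add sa00) ((sm_coord 0).mul sa0),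
        pd_add (hA.add sa22) sa00, pd_add hA sa22, pd_mul (sm_coord 0) sa0, pd_coord]
      simp
    have d2 : pd 1 (pd 2 P) p = pd 1 (pd 0 A) p := by rw [e']
    have hc := pd_comm hP 2 1 p
    linear_combination d1 - d2 - hc + n002 p - p 0 * n02 p - n10 p
  -- K3
  have hK3 : ∀ p, pd 1 (pd 1 A) p
      = p 0 * pd 0 A p + (p 0 * p 0 - 1) * pd 2 (pd 2 A) p - 2 * pd 0 (pd 0 A) p := by
    have e : pd 0 B = fun q => -(pd 1 A q) - q 0 * pd 2 A q := funext hD4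
    have e' : pd 1 B = fun q => pd 0 A q + q 0 * (pd 2 (pd 2 A) q + pd 0 (pd 0 A) q) :=
      funext hB1'
    intro p
    have d1 : pd 1 (pd 0 B) p = -(pd 1 (pd 1 A) p) - (p 0 * pd 1 (pd 2 A) p) := by
      rw [e, pd_sub sa1.neg ((sm_coord 0).mul sa2), pd_neg, pd_mul (sm_coord 0) sa2, pd_coord]
      simp
    have d2 : pd 0 (pd 1 B) p
        = pd 0 (pd 0 A) p + ((pd 2 (pd 2 A) p + pd 0 (pd 0 A) p)
          + p 0 * (pd 0 (pd 2 (pd 2 A)) p + pd 0 (pd 0 (pd 0 A)) p)) := by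
      rw [e', pd_add sa0 ((sm_coord 0).mul (sa22.add sa00)),
        pd_mul (sm_coord 0) (sa22.add sa00), pd_add sa22 sa00, pd_coord]
      simp
    have hc := pd_comm hB 1 0 p
    linear_combination d1 - d2 - hc - p 0 * hK2 p - p 0 * hK4 p
  -- auxiliary: x-derivative of K2
  have hd012 : ∀ p, pd 0 (pd 1 (pd 2 A)) p
      = -(1/2) * pd 0 (pd 0 A) p - (pd 2 (pd 2 A) p + p 0 * pd 0 (pd 2 (pd 2 A)) p) := by
    have e' : pd 1 (pd 2 A) = fun q => -(1/2) * pd 0 A q - q 0 * pd 2 (pd 2 A) q := funext hK2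
    intro p
    rw [e', pd_sub (contDiff_const.mul sa0) ((sm_coord 0).mul sa22), pd_cmul sa0,
      pd_mul (sm_coord 0) sa22, pd_coord]
    simp
  -- K6
  have hK6 : ∀ p, pd 2 (pd 2 (pd 2 (pd 2 A))) p + pd 0 (pd 0 (pd 2 (pd 2 A))) p
      = -2 * pd 2 (pd 2 A) p - (1/2) * pd 0 (pd 0 A) p := by
    have e : pd 0 (pd 1 A) = fun q => pd 2 A q + pd 2 (pd 2 (pd 2 A)) q
        + pd 0 (pd 0 (pd 2 A)) q - q 0 * pd 0 (pd 2 A) q := funext hK1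
    intro p
    have d1 : pd 2 (pd 0 (pd 1 A)) p
        = pd 2 (pd 2 A) p + pd 2 (pd 2 (pd 2 (pd 2 A))) p + pd 2 (pd 0 (pd 0 (pd 2 A))) p
          - (p 0 * pd 2 (pd 0 (pd 2 A)) p) := by
      rw [e, pd_sub ((sa2.add sa222).add sa002) ((sm_coord 0).mul sa02),
        pd_add (sa2.add sa222) sa002, pd_add sa2 sa222, pd_mul (sm_coord 0) sa02, pd_coord]
      simp
    linear_combination (-1) * d1 + hd012 p + n012 p - n0022 p + p 0 * n022 p
  -- K5
  have hK5 : ∀ p, pd 2 A p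
      = pd 2 (pd 2 (pd 2 A)) p + 3 * pd 0 (pd 0 (pd 2 A)) p := by
    have e' : pd 1 (pd 2 A) = fun q => -(1/2) * pd 0 A q - q 0 * pd 2 (pd 2 A) q := funext hK2
    have e3' : pd 1 (pd 1 A) = fun q => q 0 * pd 0 A q
        + (q 0 * q 0 - 1) * pd 2 (pd 2 A) q - 2 * pd 0 (pd 0 A) q := funext hK3
    intro p
    have k5a : pd 1 (pd 1 (pd 2 A)) p
        = -(1/2) * pd 1 (pd 0 A) p - (p 0 * pd 1 (pd 2 (pd 2 A)) p) := by
      rw [e', pd_sub (contDiff_const.mul sa0) ((sm_coord 0).mul sa22), pd_cmul sa0,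
        pd_mul (sm_coord 0) sa22, pd_coord]
      simp
    have k5c : pd 2 (pd 1 (pd 2 A)) p
        = -(1/2) * pd 2 (pd 0 A) p - (p 0 * pd 2 (pd 2 (pd 2 A)) p) := by
      rw [e', pd_sub (contDiff_const.mul sa0) ((sm_coord 0).mul sa22), pd_cmul sa0,
        pd_mul (sm_coord 0) sa22, pd_coord]
      simp
    have k5b : pd 2 (pd 1 (pd 1 A)) p
        = p 0 * pd 2 (pd 0 A) p + (p 0 * p 0 - 1) * pd 2 (pd 2 (pd 2 A)) p
          - 2 * pd 2 (pd 0 (pd 0 A)) p := by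
      rw [e3', pd_sub (((sm_coord 0).mul sa0).add
          ((((sm_coord 0).mul (sm_coord 0)).sub contDiff_const).mul sa22))
          (contDiff_const.mul sa00),
        pd_add ((sm_coord 0).mul sa0)
          ((((sm_coord 0).mul (sm_coord 0)).sub contDiff_const).mul sa22),
        pd_mul (sm_coord 0) sa0,
        pd_mul (((sm_coord 0).mul (sm_coord 0)).sub contDiff_const) sa22,
        pd_sub ((sm_coord 0).mul (sm_coord 0)) contDiff_const,
        pd_mul (sm_coord 0) (sm_coord 0), pd_cmul sa00, pd_coord, pd_const]
      simp
    -- combine: the two computations of A_{112}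
    have k5c' : pd 1 (pd 2 (pd 2 A)) p
        = -(1/2) * pd 0 (pd 2 A) p - p 0 * pd 2 (pd 2 (pd 2 A)) p := by
      linear_combination k5c - n122 p - (1/2) * n02 p
    linear_combination (-2) * k5b + 2 * n112 p - 2 * p 0 * n02 p + 4 * n002 p
      + 2 * k5a - n10 p - 2 * p 0 * k5c' - hK1 p
  -- M0 chain
  have hM0 : ∀ p, pd 0 (pd 0 (pd 0 A)) p = pd 0 A p + pd 0 (pd 2 (pd 2 A)) p := by
    have eK1 : pd 0 (pd 1 A) = fun q => pd 2 A q + pd 2 (pd 2 (pd 2 A)) q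
        + pd 0 (pd 0 (pd 2 A)) q - q 0 * pd 0 (pd 2 A) q := funext hK1
    have eK3 : pd 1 (pd 1 A) = fun q => q 0 * pd 0 A q
        + (q 0 * q 0 - 1) * pd 2 (pd 2 A) q - 2 * pd 0 (pd 0 A) q := funext hK3
    have eK2 : pd 1 (pd 2 A) = fun q => -(1/2) * pd 0 A q - q 0 * pd 2 (pd 2 A) q := funext hK2
    have ed : pd 0 (pd 1 (pd 2 A)) = fun q => -(1/2) * pd 0 (pd 0 A) q
        - (pd 2 (pd 2 A) q + q 0 * pd 0 (pd 2 (pd 2 A)) q) := funext hd012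
    intro p
    have m1 : pd 0 (pd 1 (pd 1 A)) p
        = (pd 0 A p + p 0 * pd 0 (pd 0 A) p)
          + ((p 0 + p 0) * pd 2 (pd 2 A) p + (p 0 * p 0 - 1) * pd 0 (pd 2 (pd 2 A)) p)
          - 2 * pd 0 (pd 0 (pd 0 A)) p := by
      rw [eK3, pd_sub (((sm_coord 0).mul sa0).add
          ((((sm_coord 0).mul (sm_coord 0)).sub contDiff_const).mul sa22))
          (contDiff_const.mul sa00),
        pd_add ((sm_coord 0).mul sa0)
          ((((sm_coord 0).mul (sm_coord 0)).sub contDiff_const).mul sa22),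
        pd_mul (sm_coord 0) sa0,
        pd_mul (((sm_coord 0).mul (sm_coord 0)).sub contDiff_const) sa22,
        pd_sub ((sm_coord 0).mul (sm_coord 0)) contDiff_const,
        pd_mul (sm_coord 0) (sm_coord 0), pd_cmul sa00, pd_coord, pd_const]
      simp
    have m2 : pd 1 (pd 0 (pd 1 A)) p
        = pd 1 (pd 2 A) p + pd 1 (pd 2 (pd 2 (pd 2 A))) p + pd 1 (pd 0 (pd 0 (pd 2 A))) p
          - (p 0 * pd 1 (pd 0 (pd 2 A)) p) := by
      rw [eK1, pd_sub ((sa2.add sa222).add sa002) ((sm_coord 0).mul sa02),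
        pd_add (sa2.add sa222) sa002, pd_add sa2 sa222, pd_mul (sm_coord 0) sa02, pd_coord]
      simp
    have m3 : pd 2 (pd 1 (pd 2 A)) p
        = -(1/2) * pd 2 (pd 0 A) p - (p 0 * pd 2 (pd 2 (pd 2 A)) p) := by
      rw [eK2, pd_sub (contDiff_const.mul sa0) ((sm_coord 0).mul sa22), pd_cmul sa0,
        pd_mul (sm_coord 0) sa22, pd_coord]
      simp
    have m3' : pd 1 (pd 2 (pd 2 (pd 2 A))) p
        = -(1/2) * pd 0 (pd 2 (pd 2 A)) p - p 0 * pd 2 (pd 2 (pd 2 (pd 2 A))) p := by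
      -- differentiate k5c' := (the normalized m3) in z
      have k5c' : ∀ p, pd 1 (pd 2 (pd 2 A)) p
          = -(1/2) * pd 0 (pd 2 A) p - p 0 * pd 2 (pd 2 (pd 2 A)) p := by
        intro q
        have m3q : pd 2 (pd 1 (pd 2 A)) q
            = -(1/2) * pd 2 (pd 0 A) q - (q 0 * pd 2 (pd 2 (pd 2 A)) q) := by
          rw [eK2, pd_sub (contDiff_const.mul sa0) ((sm_coord 0).mul sa22), pd_cmul sa0,
            pd_mul (sm_coord 0) sa22, pd_coord]
          simp
        linear_combination m3q - n122 q - (1/2) * n02 q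
      have ek : pd 1 (pd 2 (pd 2 A)) = fun q => -(1/2) * pd 0 (pd 2 A) q
          - q 0 * pd 2 (pd 2 (pd 2 A)) q := funext k5c'
      have d : pd 2 (pd 1 (pd 2 (pd 2 A))) p
          = -(1/2) * pd 2 (pd 0 (pd 2 A)) p - (p 0 * pd 2 (pd 2 (pd 2 (pd 2 A))) p) := by
        rw [ek, pd_sub (contDiff_const.mul sa02) ((sm_coord 0).mul sa222), pd_cmul sa02,
          pd_mul (sm_coord 0) sa222, pd_coord]
        simp
      linear_combination d - n1222 p - (1/2) * n022 p
    have m5 : pd 0 (pd 0 (pd 1 (pd 2 A))) p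
        = -(1/2) * pd 0 (pd 0 (pd 0 A)) p
          - (pd 0 (pd 2 (pd 2 A)) p
            + (pd 0 (pd 2 (pd 2 A)) p + p 0 * pd 0 (pd 0 (pd 2 (pd 2 A))) p)) := by
      rw [ed, pd_sub (contDiff_const.mul sa00) (sa22.add ((sm_coord 0).mul sa022)),
        pd_cmul sa00, pd_add sa22 ((sm_coord 0).mul sa022), pd_mul (sm_coord 0) sa022,
        pd_coord]
      simp
    linear_combination (-2/3) * (m2 - n011 p + n0012 p - p 0 * n012b p + hK2 p + m3' + m5
      - p 0 * hd012 p - p 0 * hK6 p - m1)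
  have hM1 : ∀ p, pd 0 (pd 2 (pd 2 A)) p = -(3/4) * pd 0 A p := by
    intro p; linear_combination (1/2) * hK4 p - (1/2) * hM0 p
  have hM2 : ∀ p, pd 0 (pd 0 (pd 0 A)) p = (1/4) * pd 0 A p := by
    intro p; linear_combination (1/2) * hM0 p + (1/2) * hK4 p
  -- L3 chain : conclude A_{xz} = 0
  have hZ1 : ∀ p, pd 0 (pd 2 A) p = 0 := by
    intro p
    have l1 : pd 0 (pd 2 A) p
        = pd 0 (pd 2 (pd 2 (pd 2 A))) p + 3 * pd 0 (pd 0 (pd 0 (pd 2 A))) p := by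
      have := pd_congr' (F := pd 2 A)
        (G := fun q => pd 2 (pd 2 (pd 2 A)) q + 3 * pd 0 (pd 0 (pd 2 A)) q) hK5 0 p
      rw [pd_add sa222 (contDiff_const.mul sa002), pd_cmul sa002] at this
      exact this
    have l2d : pd 2 (pd 0 (pd 0 (pd 0 A))) p
        = -(1/2) * pd 2 (pd 0 A) p - pd 2 (pd 0 (pd 2 (pd 2 A))) p := by
      have := pd_congr' (F := pd 0 (pd 0 (pd 0 A)))
        (G := fun q => -(1/2) * pd 0 A q - pd 0 (pd 2 (pd 2 A)) q) hK4 2 p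
      rw [pd_sub (contDiff_const.mul sa0) sa022, pd_cmul sa0] at this
      exact this
    have l2 : pd 0 (pd 0 (pd 0 (pd 2 A))) p + pd 0 (pd 2 (pd 2 (pd 2 A))) p
        = -(1/2) * pd 0 (pd 2 A) p := by
      linear_combination l2d - n0002 p - n0222 p - (1/2) * n02 p
    have hL3 : pd 0 (pd 0 (pd 0 (pd 2 A))) p = (3/4) * pd 0 (pd 2 A) p := by
      linear_combination (-1/2) * l1 + (-1/2) * l2
    have l3d : pd 2 (pd 0 (pd 0 (pd 0 A))) p = (1/4) * pd 2 (pd 0 A) p := by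
      have := pd_congr' (F := pd 0 (pd 0 (pd 0 A)))
        (G := fun q => (1/4) * pd 0 A q) hM2 2 p
      rw [pd_cmul sa0] at this
      exact this
    have hL3b : pd 0 (pd 0 (pd 0 (pd 2 A))) p = (1/4) * pd 0 (pd 2 A) p := by
      linear_combination l3d - n0002 p + (1/4) * n02 p
    linear_combination (-2) * hL3 + 2 * hL3b
  -- zero propagation
  have hZ022 : ∀ p, pd 0 (pd 2 (pd 2 A)) p = 0 := by
    intro p
    have d : pd 2 (pd 0 (pd 2 A)) p = 0 := by
      have := pd_congr' (F := pd 0 (pd 2 A)) (G := fun _ => (0:ℝ)) hZ1 2 p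
      rw [pd_const] at this
      exact this
    linear_combination d - n022 p
  have hZ0 : ∀ p, pd 0 A p = 0 := by
    intro p; linear_combination (4/3) * hM1 p - (4/3) * hZ022 p
  have hZ00 : ∀ p, pd 0 (pd 0 A) p = 0 := by
    intro p
    have := pd_congr' (F := pd 0 A) (G := fun _ => (0:ℝ)) hZ0 0 p
    rw [pd_const] at this
    exact this
  have hZ002 : ∀ p, pd 0 (pd 0 (pd 2 A)) p = 0 := by
    intro p
    have := pd_congr' (F := pd 0 (pd 2 A)) (G := fun _ => (0:ℝ)) hZ1 0 p
    rw [pd_const] at this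
    exact this
  have hZ0022 : ∀ p, pd 0 (pd 0 (pd 2 (pd 2 A))) p = 0 := by
    intro p
    have := pd_congr' (F := pd 0 (pd 2 (pd 2 A))) (G := fun _ => (0:ℝ)) hZ022 0 p
    rw [pd_const] at this
    exact this
  have hZ22 : ∀ p, pd 2 (pd 2 A) p = 0 := by
    intro p
    have hz1 : pd 2 (pd 0 (pd 0 (pd 2 A))) p = 0 := by
      have := pd_congr' (F := pd 0 (pd 0 (pd 2 A))) (G := fun _ => (0:ℝ)) hZ002 2 p
      rw [pd_const] at this
      exact this
    have d : pd 2 (pd 2 A) p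
        = pd 2 (pd 2 (pd 2 (pd 2 A))) p + 3 * pd 2 (pd 0 (pd 0 (pd 2 A))) p := by
      have := pd_congr' (F := pd 2 A)
        (G := fun q => pd 2 (pd 2 (pd 2 A)) q + 3 * pd 0 (pd 0 (pd 2 A)) q) hK5 2 p
      rw [pd_add sa222 (contDiff_const.mul sa002), pd_cmul sa002] at this
      exact this
    linear_combination (1/3) * d + hz1 + (1/3) * hK6 p - (1/3) * hZ0022 p - (1/6) * hZ00 p
  have hZ222 : ∀ p, pd 2 (pd 2 (pd 2 A)) p = 0 := by
    intro p
    have := pd_congr' (F := pd 2 (pd 2 A)) (G := fun _ => (0:ℝ)) hZ22 2 p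
    rw [pd_const] at this
    exact this
  have hZ2 : ∀ p, pd 2 A p = 0 := by
    intro p; linear_combination hK5 p + hZ222 p + 3 * hZ002 p
  have hZ11 : ∀ p, pd 1 (pd 1 A) p = 0 := by
    intro p
    linear_combination hK3 p + p 0 * hZ0 p + (p 0 * p 0 - 1) * hZ22 p - 2 * hZ00 p
  have hZ12 : ∀ p, pd 1 (pd 2 A) p = 0 := by
    intro p; linear_combination hK2 p - (1/2) * hZ0 p - p 0 * hZ22 p
  have hZ01 : ∀ p, pd 0 (pd 1 A) p = 0 := by
    intro p; linear_combination hK1 p + hZ2 p + hZ222 p + hZ002 p - p 0 * hZ1 p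
  -- reconstruction of A, B, C
  have hA1c : ∀ p, pd 1 A p = pd 1 A 0 := by
    apply eq_const_of_pd_zero sa1
    intro i p
    fin_cases i
    · exact hZ01 p
    · exact hZ11 p
    · show pd 2 (pd 1 A) p = 0
      rw [pd_comm hA 2 1 p]; exact hZ12 p
  have hAform : ∀ p, A p = A 0 + pd 1 A 0 * p 1 := by
    have hsm : Sm (fun q => A q - pd 1 A 0 * q 1) :=
      hA.sub (contDiff_const.mul (sm_coord 1))
    have hzero : ∀ i p, pd i (fun q => A q - pd 1 A 0 * q 1) p = 0 := by
      intro i p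
      rw [pd_sub hA (contDiff_const.mul (sm_coord 1)), pd_cmul (sm_coord 1)]
      simp only [pd_coord]
      fin_cases i
      · simpa using hZ0 p
      · simp
        linarith [hA1c p]
      · simpa using hZ2 p
    have hcst := eq_const_of_pd_zero hsm hzero
    intro p
    have h0 := hcst p
    simp only [Pi.zero_apply, mul_zero, sub_zero] at h0
    linarith [h0]
  have hBform : ∀ p, B p = B 0 - pd 1 A 0 * p 0 := by
    have hB0' : ∀ p, pd 0 B p = -(pd 1 A 0) := by
      intro p; linear_combination hD4 p - hA1c p - p 0 * hZ2 p
    have hB1z : ∀ p, pd 1 B p = 0 := by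
      intro p; linear_combination hB1' p + hZ0 p + p 0 * hZ22 p + p 0 * hZ00 p
    have hB2z : ∀ p, pd 2 B p = 0 := by
      intro p; linear_combination hBz p - hZ22 p - hZ00 p
    have hsm : Sm (fun q => B q + pd 1 A 0 * q 0) :=
      hB.add (contDiff_const.mul (sm_coord 0))
    have hzero : ∀ i p, pd i (fun q => B q + pd 1 A 0 * q 0) p = 0 := by
      intro i p
      rw [pd_add hB (contDiff_const.mul (sm_coord 0)), pd_cmul (sm_coord 0)]
      simp only [pd_coord]
      fin_cases i
      · simp
        linarith [hB0' p]
      · simpa using hB1z p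
      · simpa using hB2z p
    have hcst := eq_const_of_pd_zero hsm hzero
    intro p
    have h0 := hcst p
    simp only [Pi.zero_apply, mul_zero, add_zero] at h0
    linarith [h0]
  -- P reconstruction
  have hPC : ∀ p, P p = C p - p 0 * B p := by
    intro p; rw [hPdef]
  have hP00 : P 0 = C 0 := by
    have := hPC 0
    simpa using this
  have hP0' : ∀ p, pd 0 P p = -(B 0) + pd 1 A 0 * p 0 := by
    intro p; linear_combination hD1 p - hZ2 p - hBform p
  have hP1x : ∀ p, pd 1 P p = A 0 + pd 1 A 0 * p 1 := by
    intro p; linear_combination hP1' p + hAform p + hZ22 p + hZ00 p - p 0 * hZ0 p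
  have hP2z : ∀ p, pd 2 P p = 0 := by
    intro p; linear_combination hD3 p + hZ0 p
  have hPform : ∀ p, P p = P 0 - B 0 * p 0 + pd 1 A 0 / 2 * (p 0 * p 0)
      + A 0 * p 1 + pd 1 A 0 / 2 * (p 1 * p 1) := by
    have hsm : Sm (fun q => P q + B 0 * q 0 - pd 1 A 0 / 2 * (q 0 * q 0)
        - A 0 * q 1 - pd 1 A 0 / 2 * (q 1 * q 1)) :=
      (((hP.add (contDiff_const.mul (sm_coord 0))).sub
        (contDiff_const.mul ((sm_coord 0).mul (sm_coord 0)))).sub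
        (contDiff_const.mul (sm_coord 1))).sub
        (contDiff_const.mul ((sm_coord 1).mul (sm_coord 1)))
    have hzero : ∀ i p, pd i (fun q => P q + B 0 * q 0 - pd 1 A 0 / 2 * (q 0 * q 0)
        - A 0 * q 1 - pd 1 A 0 / 2 * (q 1 * q 1)) p = 0 := by
      intro i p
      rw [pd_sub (((hP.add (contDiff_const.mul (sm_coord 0))).sub
            (contDiff_const.mul ((sm_coord 0).mul (sm_coord 0)))).sub
            (contDiff_const.mul (sm_coord 1)))
          (contDiff_const.mul ((sm_coord 1).mul (sm_coord 1))),
        pd_sub ((hP.add (contDiff_const.mul (sm_coord 0))).sub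
            (contDiff_const.mul ((sm_coord 0).mul (sm_coord 0))))
          (contDiff_const.mul (sm_coord 1)),
        pd_sub (hP.add (contDiff_const.mul (sm_coord 0)))
          (contDiff_const.mul ((sm_coord 0).mul (sm_coord 0))),
        pd_add hP (contDiff_const.mul (sm_coord 0)),
        pd_cmul (sm_coord 0), pd_cmul ((sm_coord 0).mul (sm_coord 0)),
        pd_cmul (sm_coord 1), pd_cmul ((sm_coord 1).mul (sm_coord 1)),
        pd_mul (sm_coord 0) (sm_coord 0), pd_mul (sm_coord 1) (sm_coord 1)]
      simp only [pd_coord]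
      fin_cases i
      · simp
        linarith [hP0' p]
      · simp
        linarith [hP1x p]
      · simpa using hP2z p
    have hcst := eq_const_of_pd_zero hsm hzero
    intro p
    have h0 := hcst p
    simp only [Pi.zero_apply, mul_zero, add_zero, sub_zero] at h0
    linarith [h0]
  refine ⟨hAform, hBform, ?_⟩
  intro p
  have h1 := hPform p
  rw [hP00] at h1
  have h2 := hPC p
  have h3 := hBform p
  linear_combination h1 - h2 + p 0 * h3


/-! ### Extraction: conformal Killing fields lie in the span -/

lemma span_of_conformal {Y : Vec 3 → Vec 3} {f : Vec 3 → ℝ}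
    (hY : ContDiff ℝ (⊤:ℕ∞) Y) (h : LieDerivEq Set.univ rie3Metric Y f) :
    ∃ c : Fin 4 → ℝ, Y = fun x => ∑ a, c a • rie3Basis a x := by
  have hYd : Differentiable ℝ Y := hY.differentiable (by simp)
  set A : Vec 3 → ℝ := fun q => Y q 0 with hAdef
  set B : Vec 3 → ℝ := fun q => Y q 1 with hBdef
  set C : Vec 3 → ℝ := fun q => Y q 2 with hCdef
  have hA : Sm A := contDiff_pi.mp hY 0
  have hB : Sm B := contDiff_pi.mp hY 1
  have hC : Sm C := contDiff_pi.mp hY 2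
  -- components of e3 vectors
  have he3 : ∀ i j : Fin 3, e3 i j = if j = i then 1 else 0 := by
    intro i j; simp [e3, Pi.single_apply]
  -- raw equations
  have raw : ∀ (i j : Fin 3) (p : Vec 3),
      2 * p 0 * (A p) * (e3 i 1 * e3 j 1) - (A p) * (e3 i 1 * e3 j 2)
        - (A p) * (e3 i 2 * e3 j 1)
      + (pd i A p * e3 j 0 + (1 + p 0 * p 0) * (pd i B p * e3 j 1)
          - p 0 * (pd i B p * e3 j 2) - p 0 * (pd i C p * e3 j 1) + pd i C p * e3 j 2)
      + (e3 i 0 * pd j A p + (1 + p 0 * p 0) * (e3 i 1 * pd j B p)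
          - p 0 * (e3 i 1 * pd j C p) - p 0 * (e3 i 2 * pd j B p) + e3 i 2 * pd j C p)
      = f p * (e3 i 0 * e3 j 0 + (1 + p 0 * p 0) * (e3 i 1 * e3 j 1)
          - p 0 * (e3 i 1 * e3 j 2) - p 0 * (e3 i 2 * e3 j 1) + e3 i 2 * e3 j 2) := by
    intro i j p
    have H := h p (Set.mem_univ p) (e3 i) (e3 j)
    rw [lie_first, metricEval_rie3, metricEval_rie3, metricEval_rie3] at H
    have hc : ∀ (w : Vec 3) (k : Fin 3), fderiv ℝ Y p w k = fderiv ℝ (fun q => Y q k) p w :=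
      fun w k => fderiv_comp_proj hYd p w k
    rw [hc (e3 i) 0, hc (e3 i) 1, hc (e3 i) 2, hc (e3 j) 0, hc (e3 j) 1, hc (e3 j) 2] at H
    exact H
  have E00 : ∀ p, f p = 2 * pd 0 A p := by
    intro p
    have := raw 0 0 p
    simp [he3] at this
    linarith
  have e1' : ∀ p, pd 1 A p + (1 + p 0 * p 0) * pd 0 B p - p 0 * pd 0 C p = 0 := by
    intro p; have := raw 0 1 p; simp [he3] at this; linarith
  have e2' : ∀ p, pd 2 A p - p 0 * pd 0 B p + pd 0 C p = 0 := by
    intro p; have := raw 0 2 p; simp [he3] at this; linarith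
  have e3' : ∀ p, 2 * p 0 * A p + 2 * ((1 + p 0 * p 0) * pd 1 B p - p 0 * pd 1 C p)
      = 2 * pd 0 A p * (1 + p 0 * p 0) := by
    intro p; have := raw 1 1 p; simp [he3] at this
    have hf := E00 p
    linear_combination this + (1 + p 0 * p 0) * hf
  have e4' : ∀ p, -(A p) + (-(p 0) * pd 1 B p + pd 1 C p)
      + ((1 + p 0 * p 0) * pd 2 B p - p 0 * pd 2 C p) = -(2 * pd 0 A p) * p 0 := by
    intro p; have := raw 1 2 p; simp [he3] at this
    have hf := E00 p
    linear_combination this - p 0 * hf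
  have e5' : ∀ p, 2 * (-(p 0) * pd 2 B p + pd 2 C p) = 2 * pd 0 A p := by
    intro p; have := raw 2 2 p; simp [he3] at this
    have hf := E00 p
    linear_combination this + hf
  obtain ⟨kA, kB, kC⟩ := key A B C hA hB hC e1' e2' e3' e4' e5'
  refine ⟨![B 0, C 0, A 0, pd 1 A 0], ?_⟩
  funext p k
  have hsum : (∑ a, (![B 0, C 0, A 0, pd 1 A 0] : Fin 4 → ℝ) a • rie3Basis a p) k
      = B 0 * rie3X1 p k + C 0 * rie3X2 p k + A 0 * rie3X3 p k
        + pd 1 A 0 * rie3X4 p k := by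
    rw [Fin.sum_univ_four]
    simp [rie3Basis]
  rw [hsum]
  fin_cases k
  · show A p = B 0 * rie3X1 p 0 + C 0 * rie3X2 p 0 + A 0 * rie3X3 p 0 + pd 1 A 0 * rie3X4 p 0
    rw [kA p]
    simp [rie3X1, rie3X2, rie3X3, rie3X4]
  · show B p = B 0 * rie3X1 p 1 + C 0 * rie3X2 p 1 + A 0 * rie3X3 p 1 + pd 1 A 0 * rie3X4 p 1
    rw [kB p]
    simp [rie3X1, rie3X2, rie3X3, rie3X4]
    ring
  · show C p = B 0 * rie3X1 p 2 + C 0 * rie3X2 p 2 + A 0 * rie3X3 p 2 + pd 1 A 0 * rie3X4 p 2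
    rw [kC p]
    simp [rie3X1, rie3X2, rie3X3, rie3X4]
    ring

/-! ### The four fields are Killing -/

lemma smooth_X1 : ContDiffOn ℝ (⊤:ℕ∞) rie3X1 Set.univ := contDiff_const.contDiffOn
lemma smooth_X2 : ContDiffOn ℝ (⊤:ℕ∞) rie3X2 Set.univ := contDiff_const.contDiffOn

lemma smooth_X3 : ContDiffOn ℝ (⊤:ℕ∞) rie3X3 Set.univ := by
  apply ContDiff.contDiffOn
  apply contDiff_pi.mpr
  intro i
  fin_cases i
  · simpa [rie3X3] using (contDiff_const : ContDiff ℝ (⊤:ℕ∞) fun _ : Vec 3 => (1:ℝ))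
  · simpa [rie3X3] using (contDiff_const : ContDiff ℝ (⊤:ℕ∞) fun _ : Vec 3 => (0:ℝ))
  · simpa [rie3X3] using sm_coord 1

lemma smooth_X4 : ContDiffOn ℝ (⊤:ℕ∞) rie3X4 Set.univ := by
  apply ContDiff.contDiffOn
  apply contDiff_pi.mpr
  intro i
  fin_cases i
  · simpa [rie3X4] using sm_coord 1
  · simpa [rie3X4] using (sm_coord 0).neg
  · have : ContDiff ℝ (⊤:ℕ∞) (fun x : Vec 3 => (1/2:ℝ) * ((x 1)^2 - (x 0)^2)) :=
      contDiff_const.mul (((sm_coord 1).pow 2).sub ((sm_coord 0).pow 2))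
    simpa [rie3X4] using this

lemma fderiv_X12 (Z : Vec 3) (p u : Vec 3) : fderiv ℝ (fun _ : Vec 3 => Z) p u = 0 := by
  simp

lemma fderiv_X3 (p u : Vec 3) : fderiv ℝ rie3X3 p u = ![0, 0, u 1] := by
  have hform : rie3X3 = fun x (i : Fin 3) =>
      (![fun _ => (1:ℝ), fun _ => (0:ℝ), fun x : Vec 3 => x 1] : Fin 3 → Vec 3 → ℝ) i x := by
    funext x i; fin_cases i <;> simp [rie3X3]
  have hF : HasFDerivAt rie3X3
      (ContinuousLinearMap.pi (![0, 0, proj3 1] : Fin 3 → Vec 3 →L[ℝ] ℝ)) p := by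
    rw [hform]
    apply hasFDerivAt_pi.mpr
    intro i
    fin_cases i
    · simpa using hasFDerivAt_const (1:ℝ) p
    · simpa using hasFDerivAt_const (0:ℝ) p
    · simpa using hasF_coord 1 p
  rw [hF.fderiv]
  funext k
  fin_cases k <;> simp [ContinuousLinearMap.pi_apply, proj3]

lemma fderiv_X4 (p u : Vec 3) :
    fderiv ℝ rie3X4 p u = ![u 1, -(u 0), p 1 * u 1 - p 0 * u 0] := by
  have hform : rie3X4 = fun x (i : Fin 3) =>
      (![fun x : Vec 3 => x 1, fun x : Vec 3 => -(x 0),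
         fun x : Vec 3 => (1/2:ℝ) * (x 1 * x 1 - x 0 * x 0)] : Fin 3 → Vec 3 → ℝ) i x := by
    funext x i; fin_cases i <;> simp [rie3X4] <;> ring
  have hF : HasFDerivAt rie3X4
      (ContinuousLinearMap.pi
        (![proj3 1, -(proj3 0),
           (1/2:ℝ) • ((p 1 • proj3 1 + p 1 • proj3 1) - (p 0 • proj3 0 + p 0 • proj3 0))]
          : Fin 3 → Vec 3 →L[ℝ] ℝ)) p := by
    rw [hform]
    apply hasFDerivAt_pi.mpr
    intro i
    fin_cases i
    · simpa using hasF_coord 1 p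
    · simpa using (hasF_coord 0 p).fun_neg
    · simpa using (((hasF_coord 1 p).mul (hasF_coord 1 p)).sub
        ((hasF_coord 0 p).mul (hasF_coord 0 p))).const_mul (1/2:ℝ)
  rw [hF.fderiv]
  funext k
  fin_cases k <;> simp [ContinuousLinearMap.pi_apply, proj3] <;> ring

lemma killing_X1 : LieDerivEq Set.univ rie3Metric rie3X1 fun _ => 0 := by
  intro p _ u v
  rw [lie_first, metricEval_rie3, metricEval_rie3, metricEval_rie3]
  have h0 : fderiv ℝ rie3X1 p = 0 := fderiv_const_apply _
  rw [h0]
  simp [rie3X1]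

lemma killing_X2 : LieDerivEq Set.univ rie3Metric rie3X2 fun _ => 0 := by
  intro p _ u v
  rw [lie_first, metricEval_rie3, metricEval_rie3, metricEval_rie3]
  have h0 : fderiv ℝ rie3X2 p = 0 := fderiv_const_apply _
  rw [h0]
  simp [rie3X2]

lemma killing_X3 : LieDerivEq Set.univ rie3Metric rie3X3 fun _ => 0 := by
  intro p _ u v
  rw [lie_first, metricEval_rie3, metricEval_rie3, metricEval_rie3,
    fderiv_X3 p u, fderiv_X3 p v]
  simp [rie3X3]
  ring

lemma killing_X4 : LieDerivEq Set.univ rie3Metric rie3X4 fun _ => 0 := by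
  intro p _ u v
  rw [lie_first, metricEval_rie3, metricEval_rie3, metricEval_rie3,
    fderiv_X4 p u, fderiv_X4 p v]
  simp [rie3X4]
  ring

/-! ### Linear independence -/

lemma indep_basis : LinearIndependent ℝ rie3Basis := by
  rw [Fintype.linearIndependent_iff]
  intro g hg
  have h0 := congrFun hg (0 : Vec 3)
  have h1 := congrFun hg (e3 1)
  have hval : ∀ p : Vec 3, (∑ i, g i • rie3Basis i) p
      = fun k => g 0 * rie3X1 p k + g 1 * rie3X2 p k + g 2 * rie3X3 p k + g 3 * rie3X4 p k := by
    intro p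
    funext k
    rw [Fin.sum_univ_four]
    simp [rie3Basis]
  rw [hval] at h0 h1
  have c0 := congrFun h0 0
  have c1 := congrFun h0 1
  have c2 := congrFun h0 2
  have d0 := congrFun h1 0
  simp [rie3X1, rie3X2, rie3X3, rie3X4, e3, Pi.single_apply] at c0 c1 c2 d0
  intro i
  fin_cases i
  · simpa using c1
  · simpa using c2
  · simpa using c0
  · show g 3 = 0
    linarith [c0, d0]

/-- **Submaximally symmetric 3-dimensional Riemannian conformal structure.**
For `g = dx² + dy² + (dz − x dy)²` on `ℝ³`: the four listed fields are Killing,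
linearly independent, and span the space of all smooth conformal Killing fields,
which is hence of dimension exactly `4`. -/
theorem riemannian3_conformal_symmetry_dim :
    IsKillingOn Set.univ rie3Metric rie3X1 ∧
    IsKillingOn Set.univ rie3Metric rie3X2 ∧
    IsKillingOn Set.univ rie3Metric rie3X3 ∧
    IsKillingOn Set.univ rie3Metric rie3X4 ∧
    LinearIndependent ℝ rie3Basis ∧
    ∀ Y : Vec 3 → Vec 3, IsConformalKillingOn Set.univ rie3Metric Y →
      ∃ c : Fin 4 → ℝ, Y = fun x => ∑ a, c a • rie3Basis a x := by
  refine ⟨⟨smooth_X1, killing_X1⟩, ⟨smooth_X2, killing_X2⟩, ⟨smooth_X3, killing_X3⟩,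
    ⟨smooth_X4, killing_X4⟩, indep_basis, ?_⟩
  rintro Y ⟨hYs, f, hf⟩
  exact span_of_conformal (contDiffOn_univ.mp hYs) hf
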